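/- Let r > 0, λ > 0, γ > 0, α ∈ ℝ, and let (a_ε)_{ε>0} be a family of continuous functions on ℝ with sup_{ε>0} ∫_ℝ |a_ε(x)| dx < ∞ and lim_{ε→0} ∫_x^y a_ε(z) dz = α·[x < 0 < y] for all x < y with x, y ≠ 0. Define T_ε on C[−r,r] by (T_ε f)(x) = 1 + 2λ ∫_{−r}^x ∫_{−r}^y V_ε(y,z) f(z) dz dy with V_ε(y,z) := exp(−2∫_z^y a_ε(u) du)·(γ·[yz < 0] + [yz ≥ 0]), and define T by (T f)(x) = 1 + 2λ ∫_{−r}^x ∫_{−r}^y V(y,z) f(z) dz dy with V(y,z) := e^{−2α} γ·[yz < 0] + [yz ≥ 0]. Then for every f ∈ C[−r,r], T_ε f converges to T f uniformly on [−r,r] as ε → 0+. -/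

import Mathlib

open MeasureTheory Set Filter Topology Real

/-- The kernel `V_ε(y,z) = exp(−2∫_z^y a)·(γ·[yz<0] + [yz≥0])`. -/
noncomputable def Vker (γ : ℝ) (a : ℝ → ℝ) (y z : ℝ) : ℝ :=
  Real.exp (-2 * ∫ u in z..y, a u) *
    (γ * (if y * z < 0 then 1 else 0) + (if 0 ≤ y * z then 1 else 0))

/-- The map `(T_ε f)(x) = 1 + 2λ ∫_{−r}^x ∫_{−r}^y V_ε(y,z) f(z) dz dy`. -/
noncomputable def Tmap (r lam γ : ℝ) (a : ℝ → ℝ) (f : ℝ → ℝ) (x : ℝ) : ℝ :=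
  1 + 2 * lam * ∫ y in (-r)..x, ∫ z in (-r)..y, Vker γ a y z * f z

/-- The limit kernel `V(y,z) = e^{−2α}γ·[yz<0] + [yz≥0]`. -/
noncomputable def Vlim (γ α : ℝ) (y z : ℝ) : ℝ :=
  Real.exp (-2 * α) * γ * (if y * z < 0 then 1 else 0) + (if 0 ≤ y * z then 1 else 0)


lemma aux_cont_int {a : ℝ → ℝ} (ha : Integrable a) :
    Continuous fun p : ℝ × ℝ => ∫ u in p.2..p.1, a u := by
  have hii : ∀ x y : ℝ, IntervalIntegrable a volume x y := fun x y =>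
    ha.intervalIntegrable
  have hP : Continuous fun t => ∫ u in (0:ℝ)..t, a u :=
    intervalIntegral.continuous_primitive (fun x y => hii x y) 0
  have heq : ∀ p : ℝ × ℝ, (∫ u in p.2..p.1, a u)
      = (∫ u in (0:ℝ)..p.1, a u) - ∫ u in (0:ℝ)..p.2, a u := by
    intro p
    rw [intervalIntegral.integral_interval_sub_left (hii 0 p.1) (hii 0 p.2)]
  simp only [heq]
  exact (hP.comp continuous_fst).sub (hP.comp continuous_snd)

lemma aux_Vker_meas {a : ℝ → ℝ} (ha : Integrable a) (γ : ℝ) :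
    Measurable fun p : ℝ × ℝ => Vker γ a p.1 p.2 := by
  unfold Vker
  have h1 : Measurable fun p : ℝ × ℝ => Real.exp (-2 * ∫ u in p.2..p.1, a u) :=
    (Real.continuous_exp.comp ((continuous_const.mul (aux_cont_int ha)))).measurable
  have hs : MeasurableSet {p : ℝ × ℝ | p.1 * p.2 < 0} :=
    measurableSet_lt (measurable_fst.mul measurable_snd) measurable_const
  have hs2 : MeasurableSet {p : ℝ × ℝ | 0 ≤ p.1 * p.2} :=
    measurableSet_le measurable_const (measurable_fst.mul measurable_snd)
  exact h1.mul (((measurable_const.mul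
    (Measurable.ite hs measurable_const measurable_const))).add
    (Measurable.ite hs2 measurable_const measurable_const))

lemma aux_Vlim_meas (γ α : ℝ) : Measurable fun p : ℝ × ℝ => Vlim γ α p.1 p.2 := by
  unfold Vlim
  have hs : MeasurableSet {p : ℝ × ℝ | p.1 * p.2 < 0} :=
    measurableSet_lt (measurable_fst.mul measurable_snd) measurable_const
  have hs2 : MeasurableSet {p : ℝ × ℝ | 0 ≤ p.1 * p.2} :=
    measurableSet_le measurable_const (measurable_fst.mul measurable_snd)
  exact ((measurable_const.mul (Measurable.ite hs measurable_const measurable_const))).add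
    (Measurable.ite hs2 measurable_const measurable_const)

lemma aux_abs_int_le {a : ℝ → ℝ} {M : ℝ} (ha : Integrable a)
    (hM : ∫ x, |a x| ≤ M) (y z : ℝ) : |∫ u in z..y, a u| ≤ M := by
  have key : ∀ p q : ℝ, p ≤ q → |∫ u in p..q, a u| ≤ M := by
    intro p q hpq
    rw [intervalIntegral.integral_of_le hpq]
    have h1 : ‖∫ u in Ioc p q, a u‖ ≤ ∫ u in Ioc p q, ‖a u‖ :=
      norm_integral_le_integral_norm a
    simp only [Real.norm_eq_abs] at h1
    refine h1.trans (le_trans ?_ hM)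
    exact setIntegral_le_integral ha.abs (ae_of_all _ fun u => abs_nonneg _)
  rcases le_total z y with h | h
  · exact key z y h
  · rw [intervalIntegral.integral_symm, abs_neg]; exact key y z h

lemma aux_Vker_bound {a : ℝ → ℝ} {M γ : ℝ} (ha : Integrable a)
    (hM : ∫ x, |a x| ≤ M) (hγ : 0 < γ) (y z : ℝ) :
    |Vker γ a y z| ≤ Real.exp (2 * M) * (γ + 1) := by
  unfold Vker
  rw [abs_mul]
  have h1 := aux_abs_int_le ha hM y z
  have h2 : |Real.exp (-2 * ∫ u in z..y, a u)| ≤ Real.exp (2 * M) := by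
    rw [abs_of_pos (Real.exp_pos _)]
    apply Real.exp_le_exp.2
    nlinarith [abs_le.1 h1]
  have h3 : |γ * (if y * z < 0 then (1:ℝ) else 0) + (if 0 ≤ y * z then (1:ℝ) else 0)|
      ≤ γ + 1 := by
    split_ifs <;>
      simp only [mul_one, mul_zero, add_zero, zero_add, abs_zero, abs_one] <;>
      [ (rw [abs_of_pos (by positivity)]);
        (rw [abs_of_pos hγ]; linarith);
        linarith;
        positivity ]
  exact mul_le_mul h2 h3 (abs_nonneg _) (Real.exp_pos _).le

lemma aux_Vlim_bound {γ : ℝ} (α : ℝ) (hγ : 0 < γ) (y z : ℝ) :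
    |Vlim γ α y z| ≤ Real.exp (-2 * α) * γ + 1 := by
  unfold Vlim
  have he := Real.exp_pos (-2 * α)
  split_ifs <;>
    simp only [mul_one, mul_zero, add_zero, zero_add, abs_zero, abs_one] <;>
    [ (rw [abs_of_pos (by positivity)]);
      (rw [abs_of_pos (by positivity)]; linarith);
      nlinarith;
      positivity ]

lemma aux_ptlim {γ α : ℝ} {l : Filter ℝ} {a : ℝ → ℝ → ℝ} (hγ : 0 < γ)
    {y z : ℝ} (hzy : z < y) (hz : z ≠ 0) (hy : y ≠ 0)
    (hl : Tendsto (fun ε => ∫ u in z..y, a ε u) l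
      (𝓝 (α * (if z < 0 ∧ 0 < y then 1 else 0)))) :
    Tendsto (fun ε => Vker γ (a ε) y z) l (𝓝 (Vlim γ α y z)) := by
  unfold Vker Vlim
  have hbase : Tendsto (fun ε => Real.exp (-2 * ∫ u in z..y, a ε u) *
      (γ * (if y * z < 0 then 1 else 0) + (if 0 ≤ y * z then 1 else 0))) l
      (𝓝 (Real.exp (-2 * (α * (if z < 0 ∧ 0 < y then 1 else 0))) *
        (γ * (if y * z < 0 then 1 else 0) + (if 0 ≤ y * z then 1 else 0)))) :=
    ((Real.continuous_exp.tendsto _).comp ((hl.const_mul (-2)))).mul_const _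
  have heq : (Real.exp (-2 * (α * (if z < 0 ∧ 0 < y then 1 else 0))) *
        (γ * (if y * z < 0 then 1 else 0) + (if 0 ≤ y * z then 1 else 0)))
      = Real.exp (-2 * α) * γ * (if y * z < 0 then (1:ℝ) else 0)
        + (if 0 ≤ y * z then (1:ℝ) else 0) := by
    rcases lt_or_ge (y * z) 0 with h | h
    · have hz0 : z < 0 := by
        by_contra h'
        push_neg at h'
        have : 0 < y := lt_of_le_of_lt h' hzy
        nlinarith
      have hy0 : 0 < y := by nlinarith
      simp [h, not_le.2 h, hz0, hy0]
    · have hne : y * z ≠ 0 := mul_ne_zero hy hz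
      have h' : 0 < y * z := lt_of_le_of_ne h (Ne.symm hne)
      have hcond : ¬ (z < 0 ∧ 0 < y) := by
        rintro ⟨h1, h2⟩; nlinarith
      simp [not_lt.2 h, h, hcond]
  rw [← heq]
  exact hbase

/-- a.e. every real differs from a constant. -/
lemma aux_ae_ne (c : ℝ) : ∀ᵐ z : ℝ ∂volume, z ≠ c := by
  rw [ae_iff]
  simp only [not_ne_iff, setOf_eq_eq_singleton]
  exact measure_singleton c

/-- Strong measurability of `y ↦ ∫ z in Ioc (-r) y, G (y, z)`. -/
lemma aux_outer_meas (r : ℝ) (G : ℝ × ℝ → ℝ) (hG : Measurable G) :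
    StronglyMeasurable (fun y => ∫ z in Ioc (-r) y, G (y, z)) := by
  have hset : MeasurableSet {p : ℝ × ℝ | p.2 ∈ Ioc (-r) p.1} := by
    have h1 : MeasurableSet {p : ℝ × ℝ | -r < p.2} :=
      measurableSet_lt measurable_const measurable_snd
    have h2 : MeasurableSet {p : ℝ × ℝ | p.2 ≤ p.1} :=
      measurableSet_le measurable_snd measurable_fst
    exact h1.inter h2
  have h1 : Measurable fun p : ℝ × ℝ =>
      indicator (Ioc (-r) p.1) (fun z => G (p.1, z)) p.2 := by
    have heq : (fun p : ℝ × ℝ => indicator (Ioc (-r) p.1) (fun z => G (p.1, z)) p.2)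
        = fun p => if p ∈ {q : ℝ × ℝ | q.2 ∈ Ioc (-r) q.1} then G p else 0 := by
      funext p
      by_cases h : p.2 ∈ Ioc (-r) p.1
      · simp only [indicator_of_mem h, mem_setOf_eq, if_pos h]
      · simp only [indicator_of_notMem h, mem_setOf_eq, if_neg h]
    rw [heq]
    exact Measurable.ite hset hG measurable_const
  have h2 := StronglyMeasurable.integral_prod_right' (ν := volume) h1.stronglyMeasurable
  have heq2 : (fun y => ∫ z in Ioc (-r) y, G (y, z))
      = fun y => ∫ z, indicator (Ioc (-r) y) (fun z => G (y, z)) z := by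
    funext y
    rw [integral_indicator measurableSet_Ioc]
  rw [heq2]
  exact h2

/-- `T_ε f → T f` uniformly on `[−r,r]` as `ε → 0+`. -/
theorem stmt2 (r lam γ α : ℝ) (hr : 0 < r) (hlam : 0 < lam) (hγ : 0 < γ)
    (a : ℝ → ℝ → ℝ)
    (hacont : ∀ ε > (0:ℝ), Continuous (a ε))
    (haint : ∀ ε > (0:ℝ), Integrable (a ε))
    (haM : ∃ M : ℝ, ∀ ε > (0:ℝ), ∫ x, |a ε x| ≤ M)
    (hlim : ∀ x y : ℝ, x < y → x ≠ 0 → y ≠ 0 →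
      Tendsto (fun ε => ∫ z in x..y, a ε z) (𝓝[>] (0:ℝ))
        (𝓝 (α * (if x < 0 ∧ 0 < y then 1 else 0))))
    (f : ℝ → ℝ) (hf : ContinuousOn f (Icc (-r) r)) :
    TendstoUniformlyOn (fun ε x => Tmap r lam γ (a ε) f x)
      (fun x => 1 + 2 * lam * ∫ y in (-r)..x, ∫ z in (-r)..y, Vlim γ α y z * f z)
      (𝓝[>] (0:ℝ)) (Icc (-r) r) := by
  obtain ⟨M, hM⟩ := haM
  have hM0 : 0 ≤ M := le_trans (integral_nonneg fun x => abs_nonneg _) (hM 1 one_pos)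
  have hrr : (-r : ℝ) ≤ r := by linarith
  obtain ⟨Cf', hCf'⟩ := isCompact_Icc.exists_bound_of_continuousOn hf
  set Cf : ℝ := |Cf'| + 1 with hCfdef
  have hCf0 : 0 < Cf := by positivity
  have hfle : ∀ z ∈ Icc (-r) r, |f z| ≤ Cf := by
    intro z hz
    have := hCf' z hz
    rw [Real.norm_eq_abs] at this
    calc |f z| ≤ Cf' := this
      _ ≤ |Cf'| + 1 := by linarith [le_abs_self Cf']
  set F : ℝ → ℝ := fun z => f (projIcc (-r) r hrr z) with hFdef
  have hFc : Continuous F :=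
    hf.comp_continuous (continuous_subtype_val.comp (continuous_projIcc))
      (fun z => (projIcc (-r) r hrr z).2)
  have hFle : ∀ z, |F z| ≤ Cf := fun z => hfle _ (projIcc (-r) r hrr z).2
  have hFeq : ∀ z ∈ Icc (-r) r, F z = f z := by
    intro z hz
    simp only [hFdef, projIcc_of_mem hrr hz]
  -- kernel bounds
  set K1 : ℝ := Real.exp (2 * M) * (γ + 1) with hK1def
  set K2 : ℝ := Real.exp (-2 * α) * γ + 1 with hK2def
  set K : ℝ := K1 + K2 with hKdef
  have hK10 : 0 < K1 := by positivity
  have hK20 : 0 < K2 := by positivity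
  have hK0 : 0 < K := by positivity
  have hVkb : ∀ ε > (0:ℝ), ∀ y z : ℝ, |Vker γ (a ε) y z| ≤ K1 :=
    fun ε hε y z => aux_Vker_bound (haint ε hε) (hM ε hε) hγ y z
  have hVlb : ∀ y z : ℝ, |Vlim γ α y z| ≤ K2 := fun y z => aux_Vlim_bound α hγ y z
  have hDb : ∀ ε > (0:ℝ), ∀ y z : ℝ, |Vker γ (a ε) y z - Vlim γ α y z| ≤ K := by
    intro ε hε y z
    calc |Vker γ (a ε) y z - Vlim γ α y z|
        ≤ |Vker γ (a ε) y z| + |Vlim γ α y z| := abs_sub _ _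
      _ ≤ K1 + K2 := add_le_add (hVkb ε hε y z) (hVlb y z)
  -- inner integral functions
  set P : ℝ → ℝ → ℝ := fun ε y => ∫ z in Ioc (-r) y, Vker γ (a ε) y z * F z with hPdef
  set Q : ℝ → ℝ := fun y => ∫ z in Ioc (-r) y, Vlim γ α y z * F z with hQdef
  set Φ : ℝ → ℝ → ℝ :=
    fun ε y => ∫ z in Ioc (-r) y, |Vker γ (a ε) y z - Vlim γ α y z| * |F z| with hΦdef
  -- measurability in y
  have hPm : ∀ ε > (0:ℝ), StronglyMeasurable (P ε) := fun ε hε =>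
    aux_outer_meas r _ ((aux_Vker_meas (haint ε hε) γ).mul (hFc.measurable.comp measurable_snd))
  have hQm : StronglyMeasurable Q :=
    aux_outer_meas r _ ((aux_Vlim_meas γ α).mul (hFc.measurable.comp measurable_snd))
  have hΦm : ∀ ε > (0:ℝ), StronglyMeasurable (Φ ε) := fun ε hε =>
    aux_outer_meas r _ ((((aux_Vker_meas (haint ε hε) γ).sub (aux_Vlim_meas γ α)).abs).mul
      ((hFc.measurable.comp measurable_snd).abs))
  -- bounds in y
  have hvol : ∀ y ∈ Icc (-r) r, (volume (Ioc (-r) y)).toReal ≤ 2 * r := by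
    intro y hy
    rw [Real.volume_Ioc, ENNReal.toReal_ofReal (by linarith [hy.1])]
    linarith [hy.2]
  have hPb : ∀ ε > (0:ℝ), ∀ y ∈ Icc (-r) r, |P ε y| ≤ K1 * Cf * (2 * r) := by
    intro ε hε y hy
    have h1 : ‖∫ z in Ioc (-r) y, Vker γ (a ε) y z * F z‖
        ≤ (K1 * Cf) * (volume (Ioc (-r) y)).toReal := by
      refine norm_setIntegral_le_of_norm_le_const measure_Ioc_lt_top
        fun z hz => ?_
      rw [Real.norm_eq_abs, abs_mul]
      exact mul_le_mul (hVkb ε hε y z) (hFle z) (abs_nonneg _) hK10.le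
    rw [Real.norm_eq_abs] at h1
    exact h1.trans (mul_le_mul_of_nonneg_left (hvol y hy) (by positivity))
  have hQb : ∀ y ∈ Icc (-r) r, |Q y| ≤ K2 * Cf * (2 * r) := by
    intro y hy
    have h1 : ‖∫ z in Ioc (-r) y, Vlim γ α y z * F z‖
        ≤ (K2 * Cf) * (volume (Ioc (-r) y)).toReal := by
      refine norm_setIntegral_le_of_norm_le_const measure_Ioc_lt_top
        fun z hz => ?_
      rw [Real.norm_eq_abs, abs_mul]
      exact mul_le_mul (hVlb y z) (hFle z) (abs_nonneg _) hK20.le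
    rw [Real.norm_eq_abs] at h1
    exact h1.trans (mul_le_mul_of_nonneg_left (hvol y hy) (by positivity))
  have hΦb : ∀ ε > (0:ℝ), ∀ y ∈ Icc (-r) r, |Φ ε y| ≤ K * Cf * (2 * r) := by
    intro ε hε y hy
    have h1 : ‖∫ z in Ioc (-r) y, |Vker γ (a ε) y z - Vlim γ α y z| * |F z|‖
        ≤ (K * Cf) * (volume (Ioc (-r) y)).toReal := by
      refine norm_setIntegral_le_of_norm_le_const measure_Ioc_lt_top
        fun z hz => ?_
      rw [Real.norm_eq_abs, abs_of_nonneg (mul_nonneg (abs_nonneg _) (abs_nonneg _))]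
      exact mul_le_mul (hDb ε hε y z) (hFle z) (abs_nonneg _) hK0.le
    rw [Real.norm_eq_abs] at h1
    exact h1.trans (mul_le_mul_of_nonneg_left (hvol y hy) (by positivity))
  have hΦnonneg : ∀ ε y, 0 ≤ Φ ε y := fun ε y =>
    setIntegral_nonneg measurableSet_Ioc fun z _ => mul_nonneg (abs_nonneg _) (abs_nonneg _)
  -- integrability of P, Q, Φ on Ioc (-r) r
  have hPint : ∀ ε > (0:ℝ), IntegrableOn (P ε) (Ioc (-r) r) := by
    intro ε hε
    refine Integrable.mono'
      (integrableOn_const measure_Ioc_lt_top.ne : IntegrableOn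
        (fun _ => K1 * Cf * (2 * r)) (Ioc (-r) r) volume)
      ((hPm ε hε).aestronglyMeasurable.restrict) ?_
    refine (ae_restrict_iff' measurableSet_Ioc).2 (ae_of_all _ fun y hy => ?_)
    rw [Real.norm_eq_abs]
    exact hPb ε hε y (Ioc_subset_Icc_self hy)
  have hQint : IntegrableOn Q (Ioc (-r) r) := by
    refine Integrable.mono'
      (integrableOn_const measure_Ioc_lt_top.ne : IntegrableOn
        (fun _ => K2 * Cf * (2 * r)) (Ioc (-r) r) volume)
      (hQm.aestronglyMeasurable.restrict) ?_
    refine (ae_restrict_iff' measurableSet_Ioc).2 (ae_of_all _ fun y hy => ?_)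
    rw [Real.norm_eq_abs]
    exact hQb y (Ioc_subset_Icc_self hy)
  have hΦint : ∀ ε > (0:ℝ), IntegrableOn (Φ ε) (Ioc (-r) r) := by
    intro ε hε
    refine Integrable.mono'
      (integrableOn_const measure_Ioc_lt_top.ne : IntegrableOn
        (fun _ => K * Cf * (2 * r)) (Ioc (-r) r) volume)
      ((hΦm ε hε).aestronglyMeasurable.restrict) ?_
    refine (ae_restrict_iff' measurableSet_Ioc).2 (ae_of_all _ fun y hy => ?_)
    rw [Real.norm_eq_abs]
    exact hΦb ε hε y (Ioc_subset_Icc_self hy)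
  -- integrability in z for fixed y
  have hker_int : ∀ ε > (0:ℝ), ∀ y : ℝ,
      IntegrableOn (fun z => Vker γ (a ε) y z * F z) (Ioc (-r) y) := by
    intro ε hε y
    refine Integrable.mono'
      (integrableOn_const measure_Ioc_lt_top.ne : IntegrableOn
        (fun _ => K1 * Cf) (Ioc (-r) y) volume)
      ((((aux_Vker_meas (haint ε hε) γ).comp
        (measurable_const.prodMk measurable_id)).mul
        hFc.measurable).aestronglyMeasurable.restrict) (ae_of_all _ fun z => ?_)
    rw [Real.norm_eq_abs, abs_mul]
    exact mul_le_mul (hVkb ε hε y z) (hFle z) (abs_nonneg _) hK10.le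
  have hlim_int : ∀ y : ℝ,
      IntegrableOn (fun z => Vlim γ α y z * F z) (Ioc (-r) y) := by
    intro y
    refine Integrable.mono'
      (integrableOn_const measure_Ioc_lt_top.ne : IntegrableOn
        (fun _ => K2 * Cf) (Ioc (-r) y) volume)
      ((((aux_Vlim_meas γ α).comp
        (measurable_const.prodMk measurable_id)).mul
        hFc.measurable).aestronglyMeasurable.restrict) (ae_of_all _ fun z => ?_)
    rw [Real.norm_eq_abs, abs_mul]
    exact mul_le_mul (hVlb y z) (hFle z) (abs_nonneg _) hK20.le
  -- rewriting the statement's interval integrals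
  have hTker : ∀ ε : ℝ, ∀ x ∈ Icc (-r) r,
      (∫ y in (-r)..x, ∫ z in (-r)..y, Vker γ (a ε) y z * f z)
        = ∫ y in Ioc (-r) x, P ε y := by
    intro ε x hx
    rw [intervalIntegral.integral_of_le hx.1]
    refine setIntegral_congr_fun measurableSet_Ioc fun y hy => ?_
    rw [intervalIntegral.integral_of_le hy.1.le]
    refine setIntegral_congr_fun measurableSet_Ioc fun z hz => ?_
    rw [hFeq z ⟨hz.1.le, le_trans hz.2 (le_trans hy.2 hx.2)⟩]
  have hTlim : ∀ x ∈ Icc (-r) r,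
      (∫ y in (-r)..x, ∫ z in (-r)..y, Vlim γ α y z * f z)
        = ∫ y in Ioc (-r) x, Q y := by
    intro x hx
    rw [intervalIntegral.integral_of_le hx.1]
    refine setIntegral_congr_fun measurableSet_Ioc fun y hy => ?_
    rw [intervalIntegral.integral_of_le hy.1.le]
    refine setIntegral_congr_fun measurableSet_Ioc fun z hz => ?_
    rw [hFeq z ⟨hz.1.le, le_trans hz.2 (le_trans hy.2 hx.2)⟩]
  -- Step 1 : uniform bound by the double integral of Φ
  have hstep1 : ∀ ε > (0:ℝ), ∀ x ∈ Icc (-r) r,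
      |Tmap r lam γ (a ε) f x
        - (1 + 2 * lam * ∫ y in (-r)..x, ∫ z in (-r)..y, Vlim γ α y z * f z)|
        ≤ 2 * lam * ∫ y in Ioc (-r) r, Φ ε y := by
    intro ε hε x hx
    have hsub : Ioc (-r) x ⊆ Ioc (-r) r := Ioc_subset_Ioc_right hx.2
    have hPx : IntegrableOn (P ε) (Ioc (-r) x) := (hPint ε hε).mono_set hsub
    have hQx : IntegrableOn Q (Ioc (-r) x) := hQint.mono_set hsub
    have key : Tmap r lam γ (a ε) f x
        - (1 + 2 * lam * ∫ y in (-r)..x, ∫ z in (-r)..y, Vlim γ α y z * f z)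
        = 2 * lam * ∫ y in Ioc (-r) x, (P ε y - Q y) := by
      simp only [Tmap]
      rw [hTker ε x hx, hTlim x hx, integral_sub hPx hQx]
      ring
    rw [key, abs_mul, abs_of_pos (by linarith : (0:ℝ) < 2 * lam)]
    refine mul_le_mul_of_nonneg_left ?_ (by linarith)
    calc |∫ y in Ioc (-r) x, (P ε y - Q y)|
        ≤ ∫ y in Ioc (-r) x, |P ε y - Q y| := by
          simpa [Real.norm_eq_abs] using
            norm_integral_le_integral_norm (μ := volume.restrict (Ioc (-r) x))
              (fun y => P ε y - Q y)
      _ ≤ ∫ y in Ioc (-r) r, |P ε y - Q y| := by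
          refine setIntegral_mono_set (((hPint ε hε).sub hQint).abs)
            (ae_of_all _ fun y => abs_nonneg _) (HasSubset.Subset.eventuallyLE hsub)
      _ ≤ ∫ y in Ioc (-r) r, Φ ε y := by
          refine setIntegral_mono_on (((hPint ε hε).sub hQint).abs) (hΦint ε hε)
            measurableSet_Ioc fun y hy => ?_
          have hPQ : P ε y - Q y
              = ∫ z in Ioc (-r) y, (Vker γ (a ε) y z * F z - Vlim γ α y z * F z) :=
            (integral_sub (hker_int ε hε y) (hlim_int y)).symm
          rw [hPQ]
          calc |∫ z in Ioc (-r) y, (Vker γ (a ε) y z * F z - Vlim γ α y z * F z)|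
              ≤ ∫ z in Ioc (-r) y, |Vker γ (a ε) y z * F z - Vlim γ α y z * F z| := by
                simpa [Real.norm_eq_abs] using
                  norm_integral_le_integral_norm (μ := volume.restrict (Ioc (-r) y))
                    (fun z => Vker γ (a ε) y z * F z - Vlim γ α y z * F z)
            _ = Φ ε y := by
                refine setIntegral_congr_fun measurableSet_Ioc fun z hz => ?_
                rw [← sub_mul, abs_mul]
  -- Step 2 : the double integral of Φ tends to 0
  have hstep2 : Tendsto (fun ε => ∫ y in Ioc (-r) r, Φ ε y) (𝓝[>] (0:ℝ)) (𝓝 0) := by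
    suffices h : Tendsto (fun ε => ∫ y in Ioc (-r) r, Φ ε y) (𝓝[>] (0:ℝ))
        (𝓝 (∫ y in Ioc (-r) r, (0:ℝ))) by simpa using h
    refine tendsto_integral_filter_of_dominated_convergence
      (fun _ => K * Cf * (2 * r)) ?_ ?_ ?_ ?_
    · filter_upwards [self_mem_nhdsWithin] with ε hε
      exact (hΦm ε hε).aestronglyMeasurable.restrict
    · filter_upwards [self_mem_nhdsWithin] with ε hε
      refine (ae_restrict_iff' measurableSet_Ioc).2 (ae_of_all _ fun y hy => ?_)
      rw [Real.norm_eq_abs]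
      exact hΦb ε hε y (Ioc_subset_Icc_self hy)
    · exact integrableOn_const measure_Ioc_lt_top.ne
    · filter_upwards [ae_restrict_of_ae (aux_ae_ne 0),
        ae_restrict_mem measurableSet_Ioc] with y hy0 hyI
      suffices h : Tendsto (fun ε => Φ ε y) (𝓝[>] (0:ℝ))
          (𝓝 (∫ z in Ioc (-r) y, (0:ℝ))) by simpa using h
      refine tendsto_integral_filter_of_dominated_convergence
        (fun _ => K * Cf) ?_ ?_ ?_ ?_
      · filter_upwards [self_mem_nhdsWithin] with ε hε
        exact (((((aux_Vker_meas (haint ε hε) γ).sub (aux_Vlim_meas γ α)).abs).comp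
          (measurable_const.prodMk measurable_id)).mul
          hFc.measurable.abs).aestronglyMeasurable.restrict
      · filter_upwards [self_mem_nhdsWithin] with ε hε
        refine ae_of_all _ fun z => ?_
        rw [Real.norm_eq_abs, abs_of_nonneg (mul_nonneg (abs_nonneg _) (abs_nonneg _))]
        exact mul_le_mul (hDb ε hε y z) (hFle z) (abs_nonneg _) hK0.le
      · exact integrableOn_const measure_Ioc_lt_top.ne
      · filter_upwards [ae_restrict_of_ae (aux_ae_ne 0), ae_restrict_of_ae (aux_ae_ne y),
          ae_restrict_mem measurableSet_Ioc] with z hz0 hzy' hzI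
        have hzy : z < y := lt_of_le_of_ne hzI.2 hzy'
        have hv := aux_ptlim (α := α) hγ hzy hz0 hy0 (hlim z y hzy hz0 hy0)
        have ht : Tendsto (fun ε => |Vker γ (a ε) y z - Vlim γ α y z| * |F z|)
            (𝓝[>] (0:ℝ)) (𝓝 (|Vlim γ α y z - Vlim γ α y z| * |F z|)) :=
          ((hv.sub tendsto_const_nhds).abs).mul_const _
        simpa using ht
  -- conclusion
  rw [Metric.tendstoUniformlyOn_iff]
  intro δ hδ
  have h2 : Tendsto (fun ε => 2 * lam * ∫ y in Ioc (-r) r, Φ ε y) (𝓝[>] (0:ℝ))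
      (𝓝 (2 * lam * 0)) := hstep2.const_mul _
  rw [mul_zero] at h2
  filter_upwards [h2.eventually_lt_const hδ, self_mem_nhdsWithin] with ε h1 hε x hx
  rw [Real.dist_eq, abs_sub_comm]
  exact lt_of_le_of_lt (hstep1 ε hε x hx) h1
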